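/- There exists ε₀ > 0 such that for every ε with 0 < ε < ε₀, the three symmetric matrices H₁ = [[−ε, −ε, ε], [−ε, −1, ε²], [ε, ε², −1]], H₂ = [[−1, −ε², ε], [−ε², −1, ε], [ε, ε, −ε]], and H₃ = [[−1, −ε, ε²], [−ε, −ε, ε], [ε², ε, −1]] are all negative definite. Consequently, for η > 0 small enough (with ε = sin η), the six critical points θ¹, …, θ⁶ of f from the preceding construction—whose Hessians are H₁, H₂, H₃, H₁, H₂, H₃ respectively—are isolated local maxima, so the MVM(0, (ε,ε,ε), Λ) distribution with Λ = [[0,−1,1],[−1,0,1],[1,1,0]] has at least six isolated modes. -/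

import Mathlib

open Real

set_option maxHeartbeats 1000000

private lemma aux_sin_sq_ge {t : ℝ} (h : |t| ≤ 1) : 0.39 * t ^ 2 ≤ sin t ^ 2 := by
  have hpi2 : π < 3.15 := pi_lt_d2
  have hp : 0 < π := pi_pos
  have h2p : (2:ℝ) ≤ π := two_le_pi
  wlog ht : 0 ≤ t generalizing t
  · have := this (t := -t) (by rwa [abs_neg]) (by linarith [not_le.mp ht])
    simpa using this
  · rw [abs_of_nonneg ht] at h
    have h2 : 2 / π * t ≤ sin t := mul_le_sin ht (by linarith)
    have h4 : (0.63 : ℝ) ≤ 2 / π := by rw [le_div_iff₀ hp]; nlinarith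
    have h5 : (0.63 : ℝ) * t ≤ 2 / π * t := mul_le_mul_of_nonneg_right h4 ht
    have h6 : 0 ≤ (0.63 : ℝ) * t := by positivity
    nlinarith [sq_nonneg t]

private lemma aux_one_sub_cos {t : ℝ} (h : |t| ≤ 1) : 0.19 * t ^ 2 ≤ 1 - cos t := by
  have hpi2 : π < 3.15 := pi_lt_d2
  have hp : 0 < π := pi_pos
  have h2p : (2:ℝ) ≤ π := two_le_pi
  have h1 : cos t ≤ 1 - 2 / π ^ 2 * t ^ 2 := cos_le_one_sub_mul_cos_sq (by linarith [abs_le.mp h])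
  have h4 : (0.2 : ℝ) ≤ 2 / π ^ 2 := by rw [le_div_iff₀ (by positivity)]; nlinarith
  nlinarith [sq_nonneg t, mul_le_mul_of_nonneg_right h4 (sq_nonneg t)]

private noncomputable def Fq (η x y z : ℝ) : ℝ :=
  sin η * cos x + sin η * sin (η + y) + sin η * sin (η + z)
    + sin x * (cos (η + y) - cos (η + z)) + cos (η + y) * cos (η + z)

private lemma Fq_decomp (η x s d : ℝ) :
    Fq η 0 0 0 - Fq η x (s + d) (s - d) =
      sin η * (1 - cos x) + 2 * sin η ^ 2 * (1 - cos s * cos d)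
        + 2 * sin η * cos η * sin s * (cos s - cos d)
        + cos (2 * η) * sin s ^ 2
        + 2 * sin x * sin η * cos s * sin d
        + 2 * cos η * sin x * sin s * sin d
        + sin d ^ 2 := by
  simp only [Fq, sin_add, cos_add, sin_sub, cos_sub, cos_two_mul, sin_zero, cos_zero]
  linear_combination
    (1 - cos s ^ 2 * cos d ^ 2 - 2 * sin s ^ 2 + sin s ^ 2 * sin d ^ 2) * sin_sq_add_cos_sq η
    + (- cos d ^ 2 + sin η ^ 2 * cos d ^ 2 + sin η ^ 2 * sin d ^ 2) * sin_sq_add_cos_sq s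
    + (-1 + sin s ^ 2 + 2 * sin η * cos η * sin s * cos s + sin η ^ 2
        - 2 * sin η ^ 2 * sin s ^ 2) * sin_sq_add_cos_sq d

private lemma Fq_pos (η x s d : ℝ) (hη : 0 < η) (hη' : η < 1/100)
    (hx : |x| ≤ 1/100) (hs : |s| ≤ 1/100) (hd : |d| ≤ 1/100)
    (hne : x ≠ 0 ∨ s ≠ 0 ∨ d ≠ 0) :
    Fq η x (s + d) (s - d) < Fq η 0 0 0 := by
  have hpi : (3 : ℝ) < π := pi_gt_three
  have hE0 : 0 < sin η := sin_pos_of_pos_of_lt_pi hη (by linarith)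
  have hE1 : sin η < 1/100 := lt_of_le_of_lt (le_trans (le_abs_self _) abs_sin_le_abs)
      (by rwa [abs_of_pos hη])
  set E := sin η with hE
  have hsx : sin x ^ 2 ≤ x ^ 2 := sin_sq_le_sq
  have hss : sin s ^ 2 ≤ s ^ 2 := sin_sq_le_sq
  have hsd : sin d ^ 2 ≤ d ^ 2 := sin_sq_le_sq
  have hx2 : x ^ 2 ≤ (1/100)^2 := by nlinarith [abs_nonneg x, sq_abs x]
  have hs2 : s ^ 2 ≤ (1/100)^2 := by nlinarith [abs_nonneg s, sq_abs s]
  have hd2 : d ^ 2 ≤ (1/100)^2 := by nlinarith [abs_nonneg d, sq_abs d]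
  have hcη : cos η ^ 2 ≤ 1 := cos_sq_le_one η
  have hcs : cos s ^ 2 ≤ 1 := cos_sq_le_one s
  have hcd : cos d ^ 2 ≤ 1 := cos_sq_le_one d
  -- T1
  have hT1 : E * (0.19 * x ^ 2) ≤ E * (1 - cos x) :=
    mul_le_mul_of_nonneg_left (aux_one_sub_cos (by linarith)) hE0.le
  -- T2
  have hccd : cos s * cos d ≤ 1 := by
    calc cos s * cos d ≤ |cos s * cos d| := le_abs_self _
    _ = |cos s| * |cos d| := abs_mul _ _
    _ ≤ 1 := mul_le_one₀ (abs_cos_le_one s) (abs_nonneg _) (abs_cos_le_one d)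
  have hT2 : 0 ≤ 2 * E ^ 2 * (1 - cos s * cos d) :=
    mul_nonneg (by positivity) (by linarith)
  -- cos s - cos d bounds
  have hc1 : cos s - cos d ≤ (s ^ 2 + d ^ 2) / 2 := by
    have h1 := one_sub_sq_div_two_le_cos (x := d)
    have h2 := cos_le_one s
    nlinarith [sq_nonneg s]
  have hc2 : -((s ^ 2 + d ^ 2) / 2) ≤ cos s - cos d := by
    have h1 := one_sub_sq_div_two_le_cos (x := s)
    have h2 := cos_le_one d
    nlinarith [sq_nonneg d]
  have hcsq : (cos s - cos d) ^ 2 ≤ 0.0001 * (s ^ 2 + d ^ 2) := by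
    have h3 : (cos s - cos d) ^ 2 ≤ ((s ^ 2 + d ^ 2) / 2) ^ 2 := sq_le_sq' hc2 hc1
    nlinarith [sq_nonneg s, sq_nonneg d]
  -- T3
  have hT3 : -(0.0001 * s ^ 2) - 0.0001 * (s ^ 2 + d ^ 2)
      ≤ 2 * E * cos η * sin s * (cos s - cos d) := by
    have hsq := sq_nonneg (E * cos η * sin s + (cos s - cos d))
    have he2 : E ^ 2 ≤ (1/100) ^ 2 := by nlinarith
    have hb : E ^ 2 * cos η ^ 2 * sin s ^ 2 ≤ 0.0001 * s ^ 2 := by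
      have h1 : E ^ 2 * cos η ^ 2 ≤ (1/100) ^ 2 * 1 :=
        mul_le_mul he2 hcη (sq_nonneg _) (by positivity)
      have h2 : E ^ 2 * cos η ^ 2 * sin s ^ 2 ≤ (1/100) ^ 2 * 1 * s ^ 2 :=
        mul_le_mul h1 hss (sq_nonneg _) (by positivity)
      linarith
    nlinarith [hcsq]
  -- T4
  have h2η : 0.99 ≤ cos (2 * η) := by
    have := one_sub_sq_div_two_le_cos (x := 2 * η)
    nlinarith
  have hT4 : 0.38 * s ^ 2 ≤ cos (2 * η) * sin s ^ 2 := by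
    have h39 : 0.39 * s ^ 2 ≤ sin s ^ 2 := aux_sin_sq_ge (by linarith)
    have h1 : 0.99 * sin s ^ 2 ≤ cos (2 * η) * sin s ^ 2 :=
      mul_le_mul_of_nonneg_right h2η (sq_nonneg _)
    nlinarith
  -- T5
  have hT5 : -((E / 8) * x ^ 2) - (1/12) * d ^ 2 ≤ 2 * sin x * E * cos s * sin d := by
    have hsq := sq_nonneg (12 * (E * sin x * cos s) + sin d)
    have hb : 144 * (E ^ 2 * (sin x ^ 2 * cos s ^ 2)) ≤ 12 * ((E / 8) * x ^ 2) := by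
      have h1 : sin x ^ 2 * cos s ^ 2 ≤ x ^ 2 * 1 :=
        mul_le_mul hsx hcs (sq_nonneg _) (sq_nonneg x)
      have h2 : E ^ 2 * (sin x ^ 2 * cos s ^ 2) ≤ E ^ 2 * (x ^ 2 * 1) :=
        mul_le_mul_of_nonneg_left h1 (sq_nonneg E)
      have h3 : E ^ 2 * x ^ 2 ≤ (E * (1/100)) * x ^ 2 :=
        mul_le_mul_of_nonneg_right (by nlinarith) (sq_nonneg x)
      have h4 : 0 ≤ E * x ^ 2 := by positivity
      linarith
    linarith [hsq, hsd]
  -- T6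
  have hT6 : -(0.001 * s ^ 2) - (1/10) * d ^ 2 ≤ 2 * cos η * sin x * sin s * sin d := by
    have hsq := sq_nonneg (10 * (cos η * sin x * sin s) + sin d)
    have hb : 100 * (cos η ^ 2 * (sin x ^ 2 * sin s ^ 2)) ≤ 10 * (0.001 * s ^ 2) := by
      have h0 : sin x ^ 2 ≤ (1/100) ^ 2 := le_trans hsx hx2
      have h1 : sin x ^ 2 * sin s ^ 2 ≤ (1/100) ^ 2 * s ^ 2 :=
        mul_le_mul h0 hss (sq_nonneg _) (by positivity)
      have h2 : cos η ^ 2 * (sin x ^ 2 * sin s ^ 2) ≤ 1 * ((1/100) ^ 2 * s ^ 2) :=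
        mul_le_mul hcη h1 (by positivity) (by norm_num)
      linarith
    linarith [hsq, hsd]
  -- T7
  have hT7 : 0.39 * d ^ 2 ≤ sin d ^ 2 := aux_sin_sq_ge (by linarith)
  have hsum : (E / 20) * x ^ 2 + 0.3 * s ^ 2 + 0.1 * d ^ 2
      ≤ Fq η 0 0 0 - Fq η x (s + d) (s - d) := by
    rw [Fq_decomp, ← hE]
    linarith [hT1, hT2, hT3, hT4, hT5, hT6, hT7, mul_nonneg hE0.le (sq_nonneg x)]
  have hpos : 0 < (E / 20) * x ^ 2 + 0.3 * s ^ 2 + 0.1 * d ^ 2 := by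
    have hEx : 0 ≤ (E / 20) * x ^ 2 :=
      mul_nonneg (by linarith) (sq_nonneg x)
    rcases hne with h | h | h
    · have hx0 : 0 < x ^ 2 :=
        (sq_nonneg x).lt_of_ne (Ne.symm (pow_ne_zero 2 h))
      have h5 : 0 < (E / 20) * x ^ 2 := mul_pos (by linarith) hx0
      linarith [sq_nonneg s, sq_nonneg d]
    · have h5 : 0 < s ^ 2 :=
        (sq_nonneg s).lt_of_ne (Ne.symm (pow_ne_zero 2 h))
      linarith [sq_nonneg d, hEx]
    · have h5 : 0 < d ^ 2 :=
        (sq_nonneg d).lt_of_ne (Ne.symm (pow_ne_zero 2 h))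
      linarith [sq_nonneg s, hEx]
  linarith

private lemma Fq_lt (η a b c : ℝ) (hη : 0 < η) (hη' : η < 1/100)
    (ha : |a| ≤ 1/100) (hb : |b| ≤ 1/100) (hc : |c| ≤ 1/100)
    (hne : a ≠ 0 ∨ b ≠ 0 ∨ c ≠ 0) : Fq η a b c < Fq η 0 0 0 := by
  have hb' := abs_le.mp hb
  have hc' := abs_le.mp hc
  have hs : |(b + c)/2| ≤ 1/100 := abs_le.mpr ⟨by linarith, by linarith⟩
  have hd : |(b - c)/2| ≤ 1/100 := abs_le.mpr ⟨by linarith, by linarith⟩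
  have hne' : a ≠ 0 ∨ (b + c)/2 ≠ 0 ∨ (b - c)/2 ≠ 0 := by
    rcases hne with h | h | h
    · exact Or.inl h
    · rcases eq_or_ne ((b + c)/2) 0 with h1 | h1
      · exact Or.inr (Or.inr (fun h2 => h (by linarith)))
      · exact Or.inr (Or.inl h1)
    · rcases eq_or_ne ((b + c)/2) 0 with h1 | h1
      · exact Or.inr (Or.inr (fun h2 => h (by linarith)))
      · exact Or.inr (Or.inl h1)
  have := Fq_pos η a ((b + c)/2) ((b - c)/2) hη hη' ha hs hd hne'
  have e1 : (b + c)/2 + (b - c)/2 = b := by ring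
  have e2 : (b + c)/2 - (b - c)/2 = c := by ring
  rwa [e1, e2] at this

private noncomputable def fE (η : ℝ) (v : Fin 3 → ℝ) : ℝ :=
  sin η * cos (v 0) + sin η * cos (v 1) + sin η * cos (v 2)
    - sin (v 0) * sin (v 1) + sin (v 0) * sin (v 2) + sin (v 1) * sin (v 2)

private lemma shiftA (η t : ℝ) : sin (η + (t - (3 * π / 2 + η))) = cos t := by
  rw [show η + (t - (3 * π / 2 + η)) = t - (π + π / 2) by ring, sin_sub, cos_add, sin_add]
  simp

private lemma shiftB (η t : ℝ) : cos (η + (t - (3 * π / 2 + η))) = -sin t := by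
  rw [show η + (t - (3 * π / 2 + η)) = t - (π + π / 2) by ring, cos_sub, cos_add, sin_add]
  simp

private lemma shiftC (η t : ℝ) : sin (η + (π / 2 - η - t)) = cos t := by
  rw [show η + (π / 2 - η - t) = π / 2 - t by ring, sin_pi_div_two_sub]

private lemma shiftD (η t : ℝ) : cos (η + (π / 2 - η - t)) = sin t := by
  rw [show η + (π / 2 - η - t) = π / 2 - t by ring, cos_pi_div_two_sub]

private lemma map1 (η : ℝ) (v : Fin 3 → ℝ) :
    fE η v = Fq η (v 0) (v 1 - (3 * π / 2 + η)) (v 2 - (3 * π / 2 + η)) := by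
  unfold fE Fq
  rw [shiftA, shiftA, shiftB, shiftB]; ring

private lemma map2 (η : ℝ) (v : Fin 3 → ℝ) :
    fE η v = Fq η (v 2) (π / 2 - η - v 0) (v 1 - (3 * π / 2 + η)) := by
  unfold fE Fq
  rw [shiftA, shiftB, shiftC, shiftD]; ring

private lemma map3 (η : ℝ) (v : Fin 3 → ℝ) :
    fE η v = Fq η (v 1) (π / 2 - η - v 2) (π / 2 - η - v 0) := by
  unfold fE Fq
  rw [shiftC, shiftC, shiftD, shiftD]; ring

private lemma map4 (η : ℝ) (v : Fin 3 → ℝ) :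
    fE η v = Fq η (-(v 0)) (π / 2 - η - v 1) (π / 2 - η - v 2) := by
  unfold fE Fq
  rw [shiftC, shiftC, shiftD, shiftD, sin_neg, cos_neg]; ring

private lemma map5 (η : ℝ) (v : Fin 3 → ℝ) :
    fE η v = Fq η (v 2) (π / 2 - η - v 1) (v 0 - (3 * π / 2 + η)) := by
  unfold fE Fq
  rw [shiftA, shiftB, shiftC, shiftD]; ring

private lemma map6 (η : ℝ) (v : Fin 3 → ℝ) :
    fE η v = Fq η (v 1) (v 0 - (3 * π / 2 + η)) (v 2 - (3 * π / 2 + η)) := by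
  unfold fE Fq
  rw [shiftA, shiftA, shiftB, shiftB]; ring

/-- For all small enough `ε > 0` the three Hessian matrices `H₁, H₂, H₃` are
negative definite; consequently, for small enough `η > 0` (with `ε = sin η`),
the six critical points of `f` (with `κ = (ε,ε,ε)` and
`Λ = [[0,-1,1],[-1,0,1],[1,1,0]]`) are isolated local maxima, so the
`MVM(0, (ε,ε,ε), Λ)` distribution has at least six isolated modes. -/
theorem stmt_17
    (H₁ H₂ H₃ : ℝ → Matrix (Fin 3) (Fin 3) ℝ)
    (hH₁ : ∀ ε, H₁ ε = !![-ε, -ε, ε; -ε, -1, ε ^ 2; ε, ε ^ 2, -1])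
    (hH₂ : ∀ ε, H₂ ε = !![-1, -(ε ^ 2), ε; -(ε ^ 2), -1, ε; ε, ε, -ε])
    (hH₃ : ∀ ε, H₃ ε = !![-1, -ε, ε ^ 2; -ε, -ε, ε; ε ^ 2, ε, -1])
    (Λ : Matrix (Fin 3) (Fin 3) ℝ)
    (hΛ : Λ = !![0, -1, 1; -1, 0, 1; 1, 1, 0])
    (f : ℝ → (Fin 3 → ℝ) → ℝ)
    (hf : ∀ η θ, f η θ = ∑ i, Real.sin η * Real.cos (θ i)
        + (1 / 2) * ∑ i, ∑ j, Real.sin (θ i) * Λ i j * Real.sin (θ j)) :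
    (∃ ε₀ > (0 : ℝ), ∀ ε : ℝ, 0 < ε → ε < ε₀ →
      (-(H₁ ε)).PosDef ∧ (-(H₂ ε)).PosDef ∧ (-(H₃ ε)).PosDef) ∧
    (∃ η₀ > (0 : ℝ), ∀ η : ℝ, 0 < η → η < η₀ →
      ∀ θ ∈ ({![0, 3 * π / 2 + η, 3 * π / 2 + η],
              ![π / 2 - η, 3 * π / 2 + η, 0],
              ![π / 2 - η, 0, π / 2 - η],
              ![0, π / 2 - η, π / 2 - η],
              ![3 * π / 2 + η, π / 2 - η, 0],
              ![3 * π / 2 + η, 0, 3 * π / 2 + η]} : Set (Fin 3 → ℝ)),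
        ∃ δ > (0 : ℝ), ∀ θ' : Fin 3 → ℝ,
          θ' ≠ θ → dist θ' θ < δ → f η θ' < f η θ) := by
  constructor
  · -- Part 1 : negative definiteness
    refine ⟨1/16, by norm_num, fun ε hε hε' => ?_⟩
    have key : ∀ j : Fin 3, ∀ w : Fin 3 → ℝ, w j ≠ 0 → 0 < w j ^ 2 :=
      fun j w hj => (sq_nonneg _).lt_of_ne (Ne.symm (pow_ne_zero 2 hj))
    refine ⟨Matrix.posDef_iff_dotProduct_mulVec.mpr ⟨?_, ?_⟩, Matrix.posDef_iff_dotProduct_mulVec.mpr ⟨?_, ?_⟩,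
      Matrix.posDef_iff_dotProduct_mulVec.mpr ⟨?_, ?_⟩⟩
    · rw [hH₁]
      unfold Matrix.IsHermitian
      ext i j
      fin_cases i <;> fin_cases j <;> simp [Matrix.conjTranspose_apply]
    · intro x hx
      obtain ⟨i, hi⟩ := Function.ne_iff.mp hx
      simp only [Pi.zero_apply] at hi
      rw [hH₁]
      have hq : dotProduct (star x)
          ((-(!![-ε, -ε, ε; -ε, -1, ε ^ 2; ε, ε ^ 2, -1] : Matrix (Fin 3) (Fin 3) ℝ)).mulVec x)
          = ε * x 0 ^ 2 + x 1 ^ 2 + x 2 ^ 2 + 2 * ε * x 0 * x 1 - 2 * ε * x 0 * x 2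
            - 2 * ε ^ 2 * x 1 * x 2 := by
        simp [dotProduct, Matrix.mulVec, Fin.sum_univ_three]
        ring
      rw [hq]
      have hk : (ε/2) * x 0 ^ 2 + (1/8) * x 1 ^ 2 + (1/8) * x 2 ^ 2
          ≤ ε * x 0 ^ 2 + x 1 ^ 2 + x 2 ^ 2 + 2 * ε * x 0 * x 1 - 2 * ε * x 0 * x 2
            - 2 * ε ^ 2 * x 1 * x 2 := by
        nlinarith [mul_nonneg hε.le (sq_nonneg (x 0 + 2 * x 1 - 2 * x 2)),
          mul_nonneg hε.le (sq_nonneg (x 1 + x 2)),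
          mul_nonneg (mul_nonneg hε.le hε.le) (sq_nonneg (x 1 + x 2)),
          mul_nonneg (mul_nonneg hε.le hε.le) (sq_nonneg (x 1)),
          mul_nonneg (mul_nonneg hε.le hε.le) (sq_nonneg (x 2)),
          mul_le_mul_of_nonneg_right hε'.le (sq_nonneg (x 1)),
          mul_le_mul_of_nonneg_right hε'.le (sq_nonneg (x 2)),
          sq_nonneg (x 1), sq_nonneg (x 2)]
      fin_cases i <;> [have h0 := key 0 x hi; have h0 := key 1 x hi; have h0 := key 2 x hi] <;>
        nlinarith [mul_pos hε h0, hk, sq_nonneg (x 0), sq_nonneg (x 1), sq_nonneg (x 2),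
          mul_nonneg hε.le (sq_nonneg (x 0))]
    · rw [hH₂]
      unfold Matrix.IsHermitian
      ext i j
      fin_cases i <;> fin_cases j <;> simp [Matrix.conjTranspose_apply]
    · intro x hx
      obtain ⟨i, hi⟩ := Function.ne_iff.mp hx
      simp only [Pi.zero_apply] at hi
      rw [hH₂]
      have hq : dotProduct (star x)
          ((-(!![-1, -(ε ^ 2), ε; -(ε ^ 2), -1, ε; ε, ε, -ε] : Matrix (Fin 3) (Fin 3) ℝ)).mulVec x)
          = ε * x 2 ^ 2 + x 1 ^ 2 + x 0 ^ 2 - 2 * ε * x 2 * x 1 - 2 * ε * x 2 * x 0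
            + 2 * ε ^ 2 * x 1 * x 0 := by
        simp [dotProduct, Matrix.mulVec, Fin.sum_univ_three]
        ring
      rw [hq]
      have hk : (ε/2) * x 2 ^ 2 + (1/8) * x 1 ^ 2 + (1/8) * x 0 ^ 2
          ≤ ε * x 2 ^ 2 + x 1 ^ 2 + x 0 ^ 2 - 2 * ε * x 2 * x 1 - 2 * ε * x 2 * x 0
            + 2 * ε ^ 2 * x 1 * x 0 := by
        nlinarith [mul_nonneg hε.le (sq_nonneg (x 2 - 2 * x 1 - 2 * x 0)),
          mul_nonneg hε.le (sq_nonneg (x 1 - x 0)),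
          mul_nonneg (mul_nonneg hε.le hε.le) (sq_nonneg (x 1 - x 0)),
          mul_nonneg (mul_nonneg hε.le hε.le) (sq_nonneg (x 1)),
          mul_nonneg (mul_nonneg hε.le hε.le) (sq_nonneg (x 0)),
          mul_le_mul_of_nonneg_right hε'.le (sq_nonneg (x 1)),
          mul_le_mul_of_nonneg_right hε'.le (sq_nonneg (x 0)),
          sq_nonneg (x 1), sq_nonneg (x 0)]
      fin_cases i <;> [have h0 := key 0 x hi; have h0 := key 1 x hi; have h0 := key 2 x hi] <;>
        nlinarith [mul_pos hε h0, hk, sq_nonneg (x 0), sq_nonneg (x 1), sq_nonneg (x 2),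
          mul_nonneg hε.le (sq_nonneg (x 2))]
    · rw [hH₃]
      unfold Matrix.IsHermitian
      ext i j
      fin_cases i <;> fin_cases j <;> simp [Matrix.conjTranspose_apply]
    · intro x hx
      obtain ⟨i, hi⟩ := Function.ne_iff.mp hx
      simp only [Pi.zero_apply] at hi
      rw [hH₃]
      have hq : dotProduct (star x)
          ((-(!![-1, -ε, ε ^ 2; -ε, -ε, ε; ε ^ 2, ε, -1] : Matrix (Fin 3) (Fin 3) ℝ)).mulVec x)
          = ε * x 1 ^ 2 + x 0 ^ 2 + x 2 ^ 2 + 2 * ε * x 1 * x 0 - 2 * ε * x 1 * x 2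
            - 2 * ε ^ 2 * x 0 * x 2 := by
        simp [dotProduct, Matrix.mulVec, Fin.sum_univ_three]
        ring
      rw [hq]
      have hk : (ε/2) * x 1 ^ 2 + (1/8) * x 0 ^ 2 + (1/8) * x 2 ^ 2
          ≤ ε * x 1 ^ 2 + x 0 ^ 2 + x 2 ^ 2 + 2 * ε * x 1 * x 0 - 2 * ε * x 1 * x 2
            - 2 * ε ^ 2 * x 0 * x 2 := by
        nlinarith [mul_nonneg hε.le (sq_nonneg (x 1 + 2 * x 0 - 2 * x 2)),
          mul_nonneg hε.le (sq_nonneg (x 0 + x 2)),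
          mul_nonneg (mul_nonneg hε.le hε.le) (sq_nonneg (x 0 + x 2)),
          mul_nonneg (mul_nonneg hε.le hε.le) (sq_nonneg (x 0)),
          mul_nonneg (mul_nonneg hε.le hε.le) (sq_nonneg (x 2)),
          mul_le_mul_of_nonneg_right hε'.le (sq_nonneg (x 0)),
          mul_le_mul_of_nonneg_right hε'.le (sq_nonneg (x 2)),
          sq_nonneg (x 0), sq_nonneg (x 2)]
      fin_cases i <;> [have h0 := key 0 x hi; have h0 := key 1 x hi; have h0 := key 2 x hi] <;>
        nlinarith [mul_pos hε h0, hk, sq_nonneg (x 0), sq_nonneg (x 1), sq_nonneg (x 2),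
          mul_nonneg hε.le (sq_nonneg (x 1))]
  · -- Part 2 : local maxima
    refine ⟨1/100, by norm_num, fun η hη hη' θ hθ => ?_⟩
    have hfE : ∀ v : Fin 3 → ℝ, f η v = fE η v := by
      intro v
      rw [hf]
      simp [hΛ, Fin.sum_univ_three, fE]
      ring
    refine ⟨1/100, by norm_num, fun θ' hne hdist => ?_⟩
    rw [dist_pi_lt_iff (by norm_num : (0:ℝ) < 1/100)] at hdist
    simp only [Real.dist_eq] at hdist
    obtain ⟨i, hi⟩ := Function.ne_iff.mp hne
    rw [hfE, hfE]
    simp only [Set.mem_insert_iff, Set.mem_singleton_iff] at hθ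
    rcases hθ with rfl | rfl | rfl | rfl | rfl | rfl
    · rw [map1 η θ', map1 η]
      have h2 : ∀ t : Fin 3 → ℝ, t = ![0, 3 * π / 2 + η, 3 * π / 2 + η] →
          Fq η (t 0) (t 1 - (3 * π / 2 + η)) (t 2 - (3 * π / 2 + η)) = Fq η 0 0 0 := by
        intro t ht; subst ht; norm_num [Matrix.cons_val_two, Matrix.vecHead, Matrix.vecTail]
      rw [h2 _ rfl]
      refine Fq_lt η _ _ _ hη hη' ?_ ?_ ?_ ?_
      · simpa using (hdist 0).le
      · simpa using (hdist 1).le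
      · simpa using (hdist 2).le
      · fin_cases i
        · exact Or.inl (by simpa using hi)
        · exact Or.inr (Or.inl (sub_ne_zero_of_ne (by simpa using hi)))
        · exact Or.inr (Or.inr (sub_ne_zero_of_ne (by simpa using hi)))
    · rw [map2 η θ', map2 η]
      have h2 : ∀ t : Fin 3 → ℝ, t = ![π / 2 - η, 3 * π / 2 + η, 0] →
          Fq η (t 2) (π / 2 - η - t 0) (t 1 - (3 * π / 2 + η)) = Fq η 0 0 0 := by
        intro t ht; subst ht; norm_num [Matrix.cons_val_two, Matrix.vecHead, Matrix.vecTail]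
      rw [h2 _ rfl]
      refine Fq_lt η _ _ _ hη hη' ?_ ?_ ?_ ?_
      · simpa using (hdist 2).le
      · simpa [abs_sub_comm] using (hdist 0).le
      · simpa using (hdist 1).le
      · fin_cases i
        · exact Or.inr (Or.inl (sub_ne_zero_of_ne (Ne.symm (by simpa using hi))))
        · exact Or.inr (Or.inr (sub_ne_zero_of_ne (by simpa using hi)))
        · exact Or.inl (by simpa using hi)
    · rw [map3 η θ', map3 η]
      have h2 : ∀ t : Fin 3 → ℝ, t = ![π / 2 - η, 0, π / 2 - η] →
          Fq η (t 1) (π / 2 - η - t 2) (π / 2 - η - t 0) = Fq η 0 0 0 := by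
        intro t ht; subst ht; norm_num [Matrix.cons_val_two, Matrix.vecHead, Matrix.vecTail]
      rw [h2 _ rfl]
      refine Fq_lt η _ _ _ hη hη' ?_ ?_ ?_ ?_
      · simpa using (hdist 1).le
      · simpa [abs_sub_comm] using (hdist 2).le
      · simpa [abs_sub_comm] using (hdist 0).le
      · fin_cases i
        · exact Or.inr (Or.inr (sub_ne_zero_of_ne (Ne.symm (by simpa using hi))))
        · exact Or.inl (by simpa using hi)
        · exact Or.inr (Or.inl (sub_ne_zero_of_ne (Ne.symm (by simpa using hi))))
    · rw [map4 η θ', map4 η]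
      have h2 : ∀ t : Fin 3 → ℝ, t = ![0, π / 2 - η, π / 2 - η] →
          Fq η (-(t 0)) (π / 2 - η - t 1) (π / 2 - η - t 2) = Fq η 0 0 0 := by
        intro t ht; subst ht; norm_num [Matrix.cons_val_two, Matrix.vecHead, Matrix.vecTail]
      rw [h2 _ rfl]
      refine Fq_lt η _ _ _ hη hη' ?_ ?_ ?_ ?_
      · simpa [abs_neg] using (hdist 0).le
      · simpa [abs_sub_comm] using (hdist 1).le
      · simpa [abs_sub_comm] using (hdist 2).le
      · fin_cases i
        · exact Or.inl (neg_ne_zero.mpr (by simpa using hi))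
        · exact Or.inr (Or.inl (sub_ne_zero_of_ne (Ne.symm (by simpa using hi))))
        · exact Or.inr (Or.inr (sub_ne_zero_of_ne (Ne.symm (by simpa using hi))))
    · rw [map5 η θ', map5 η]
      have h2 : ∀ t : Fin 3 → ℝ, t = ![3 * π / 2 + η, π / 2 - η, 0] →
          Fq η (t 2) (π / 2 - η - t 1) (t 0 - (3 * π / 2 + η)) = Fq η 0 0 0 := by
        intro t ht; subst ht; norm_num [Matrix.cons_val_two, Matrix.vecHead, Matrix.vecTail]
      rw [h2 _ rfl]
      refine Fq_lt η _ _ _ hη hη' ?_ ?_ ?_ ?_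
      · simpa using (hdist 2).le
      · simpa [abs_sub_comm] using (hdist 1).le
      · simpa using (hdist 0).le
      · fin_cases i
        · exact Or.inr (Or.inr (sub_ne_zero_of_ne (by simpa using hi)))
        · exact Or.inr (Or.inl (sub_ne_zero_of_ne (Ne.symm (by simpa using hi))))
        · exact Or.inl (by simpa using hi)
    · rw [map6 η θ', map6 η]
      have h2 : ∀ t : Fin 3 → ℝ, t = ![3 * π / 2 + η, 0, 3 * π / 2 + η] →
          Fq η (t 1) (t 0 - (3 * π / 2 + η)) (t 2 - (3 * π / 2 + η)) = Fq η 0 0 0 := by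
        intro t ht; subst ht; norm_num [Matrix.cons_val_two, Matrix.vecHead, Matrix.vecTail]
      rw [h2 _ rfl]
      refine Fq_lt η _ _ _ hη hη' ?_ ?_ ?_ ?_
      · simpa using (hdist 1).le
      · simpa using (hdist 0).le
      · simpa using (hdist 2).le
      · fin_cases i
        · exact Or.inr (Or.inl (sub_ne_zero_of_ne (by simpa using hi)))
        · exact Or.inl (by simpa using hi)
        · exact Or.inr (Or.inr (sub_ne_zero_of_ne (by simpa using hi)))
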